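/- Let K be a splitting field of the finite group G with char K ∤ |G|, K ⊆ K' a field extension, and V a finite-dimensional representation of G over K. Then V is irreducible if and only if V ⊗_K K' is irreducible as a representation of G over K'. -/

import Mathlib

open TensorProduct

/-- The base change `V ⊗_K K'` of a representation of `G` on `V` over `K` to a field
extension `K'` of `K`. -/
noncomputable def repBaseChange {K K' G V : Type*} [Field K] [Field K'] [Algebra K K']
    [Monoid G] [AddCommGroup V] [Module K V] (ρ : Representation K G V) :
    Representation K' G (K' ⊗[K] V) where
  toFun g := LinearMap.baseChange K' (ρ g)
  map_one' := by
    simp only [map_one]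
    exact LinearMap.baseChange_one _ _
  map_mul' g h := by
    simp only [map_mul]
    exact LinearMap.baseChange_mul (ρ g) (ρ h)

/-- Over a field, `1 ⊗ v = 0` implies `v = 0`. -/
lemma one_tmul_eq_zero_iff {K K' V : Type*} [Field K] [Field K'] [Algebra K K']
    [AddCommGroup V] [Module K V] {v : V} :
    (1 : K') ⊗ₜ[K] v = 0 ↔ v = 0 := by
  constructor
  · intro h
    let b := Module.Basis.ofVectorSpace K V
    have h2 : ∀ i, (b.baseChange K').repr ((1 : K') ⊗ₜ[K] v) i = 0 := by
      rw [h]; simp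
    have h3 : ∀ i, b.repr v i = 0 := by
      intro i
      have := h2 i
      rw [Module.Basis.baseChange_repr_tmul] at this
      have : algebraMap K K' (b.repr v i) = 0 := by
        rwa [Algebra.algebraMap_eq_smul_one]
      exact (algebraMap K K').injective (by simpa using this)
    have : b.repr v = 0 := Finsupp.ext h3
    simpa using congrArg b.repr.symm this
  · rintro rfl; simp


/-- The range of `asAlgebraHom` is contained in the span of the range of `ρ`. -/
lemma asAlgebraHom_mem_span {K G V : Type*} [Field K] [Group G]
    [AddCommGroup V] [Module K V] (ρ : Representation K G V) (x : MonoidAlgebra K G) :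
    ρ.asAlgebraHom x ∈ Submodule.span K (Set.range ρ) := by
  induction x using MonoidAlgebra.induction with
  | zero => simp
  | single_add g c f _ _ ih =>
    rw [map_add]
    refine Submodule.add_mem _ ?_ ih
    rw [Representation.asAlgebraHom_single]
    exact Submodule.smul_mem _ _ (Submodule.subset_span ⟨g, rfl⟩)


/-- For a splitting field `K` of `G` with `char K ∤ |G|`, a finite-dimensional
representation `V` over `K` is irreducible iff its base change `V ⊗_K K'` to any field
extension `K'` is irreducible. -/
theorem irreducible_iff_baseChange_irreducible
    {K K' G : Type*} [Field K] [Field K'] [Algebra K K'] [Group G] [Fintype G]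
    (hchar : ¬ (ringChar K ∣ Fintype.card G))
    (hsplit : ∀ (V₀ : Type) [AddCommGroup V₀] [Module K V₀] [FiniteDimensional K V₀]
      (ρ₀ : Representation K G V₀), Nontrivial V₀ →
      (∀ U : Submodule K V₀, (∀ (g : G), ∀ x ∈ U, ρ₀ g x ∈ U) → U = ⊥ ∨ U = ⊤) →
      Function.Surjective ρ₀.asAlgebraHom)
    {V : Type} [AddCommGroup V] [Module K V] [FiniteDimensional K V]
    (ρ : Representation K G V) :
    ((Nontrivial V ∧
        ∀ U : Submodule K V, (∀ (g : G), ∀ x ∈ U, ρ g x ∈ U) → U = ⊥ ∨ U = ⊤) ↔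
      (Nontrivial (K' ⊗[K] V) ∧
        ∀ U : Submodule K' (K' ⊗[K] V),
          (∀ (g : G), ∀ x ∈ U, repBaseChange ρ g x ∈ U) → U = ⊥ ∨ U = ⊤)) := by
  classical
  constructor
  · rintro ⟨hV, hirr⟩
    constructor
    · obtain ⟨v, hv⟩ := exists_ne (0 : V)
      exact ⟨(1 : K') ⊗ₜ[K] v, 0, fun h => hv (one_tmul_eq_zero_iff.mp h)⟩
    · intro U hU
      -- the span of the range of ρ is everything
      have hsurj := hsplit V ρ hV hirr
      have hspan : Submodule.span K (Set.range ρ) = ⊤ := by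
        rw [eq_top_iff]
        intro f _
        obtain ⟨x, hx⟩ := hsurj f
        simpa [hx] using asAlgebraHom_mem_span ρ x
      -- U is invariant under base changes of all K-endomorphisms
      have hinv : ∀ f : Module.End K V, ∀ x ∈ U, f.baseChange K' x ∈ U := by
        intro f
        have hf : f ∈ Submodule.span K (Set.range ρ) := hspan ▸ Submodule.mem_top
        induction hf using Submodule.span_induction with
        | mem f hf =>
          obtain ⟨g, rfl⟩ := hf
          exact fun x hx => hU g x hx
        | zero => intro x hx; rw [LinearMap.baseChange_zero]; simpa using U.zero_mem
        | add f₁ f₂ _ _ ih₁ ih₂ =>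
          intro x hx
          rw [LinearMap.baseChange_add, LinearMap.add_apply]
          exact U.add_mem (ih₁ x hx) (ih₂ x hx)
        | smul c f _ ih =>
          intro x hx
          rw [LinearMap.baseChange_smul, LinearMap.smul_apply, ← algebraMap_smul K' c]
          exact U.smul_mem _ (ih x hx)
      rcases eq_or_ne U ⊥ with h | h
      · exact Or.inl h
      · right
        obtain ⟨u, huU, hu⟩ := U.ne_bot_iff.mp h
        set b := Module.Basis.ofVectorSpace K V with hb
        set b' := b.baseChange K' with hb'
        have hru : b'.repr u ≠ 0 := fun h0 => hu (by simpa using congrArg b'.repr.symm h0)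
        obtain ⟨i₀, hi₀⟩ : ∃ i, b'.repr u i ≠ 0 := by
          by_contra hc
          push_neg at hc
          exact hru (Finsupp.ext hc)
        -- key computation
        have key : ∀ v : V,
            ((b.coord i₀).smulRight v).baseChange K' u
              = b'.repr u i₀ • ((1 : K') ⊗ₜ[K] v) := by
          intro v
          have : ((b.coord i₀).smulRight v).baseChange K'
              = (b'.coord i₀).smulRight ((1 : K') ⊗ₜ[K] v) := by
            apply b'.ext
            intro i
            rw [hb', Module.Basis.baseChange_apply]
            rw [LinearMap.baseChange_tmul]
            simp only [LinearMap.smulRight_apply, Module.Basis.coord_apply, Module.Basis.repr_self,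
              tmul_smul, Module.Basis.baseChange_apply]
            rw [Module.Basis.baseChange_repr_tmul]
            simp only [Finsupp.single_apply]
            split_ifs with hii
            · subst hii; simp
            · simp [Module.Basis.repr_self, Finsupp.single_eq_of_ne' hii]
          rw [this]
          simp [Module.Basis.coord_apply]
        have hone : ∀ v : V, (1 : K') ⊗ₜ[K] v ∈ U := by
          intro v
          have h1 : b'.repr u i₀ • ((1 : K') ⊗ₜ[K] v) ∈ U := by
            rw [← key v]; exact hinv _ u huU
          have := U.smul_mem (b'.repr u i₀)⁻¹ h1
          rwa [smul_smul, inv_mul_cancel₀ hi₀, one_smul] at this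
        have htop : ∀ x : K' ⊗[K] V, x ∈ U := by
          intro x
          induction x using TensorProduct.induction_on with
          | zero => exact U.zero_mem
          | tmul c v =>
            have : c ⊗ₜ[K] v = c • ((1 : K') ⊗ₜ[K] v) := by
              rw [smul_tmul', smul_eq_mul, mul_one]
            rw [this]
            exact U.smul_mem _ (hone v)
          | add x y ihx ihy => exact U.add_mem ihx ihy
        rw [eq_top_iff]
        exact fun x _ => htop x
  · rintro ⟨hV', hirr'⟩
    constructor
    · by_contra hV
      rw [not_nontrivial_iff_subsingleton] at hV
      have : ∀ x : K' ⊗[K] V, x = 0 := by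
        intro x
        induction x using TensorProduct.induction_on with
        | zero => rfl
        | tmul c v => rw [Subsingleton.elim v 0, tmul_zero]
        | add x y ihx ihy => rw [ihx, ihy, add_zero]
      obtain ⟨x, y, hxy⟩ := hV'
      exact hxy ((this x).trans (this y).symm)
    · intro U hU
      have hinv' : ∀ g : G, ∀ x ∈ U.baseChange K', repBaseChange ρ g x ∈ U.baseChange K' := by
        intro g x hx
        rw [Submodule.baseChange_eq_span] at hx
        induction hx using Submodule.span_induction with
        | mem x hx =>
          obtain ⟨m, hm, rfl⟩ := hx
          show repBaseChange ρ g ((1 : K') ⊗ₜ[K] m) ∈ _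
          rw [show repBaseChange ρ g ((1 : K') ⊗ₜ[K] m) = (1 : K') ⊗ₜ[K] (ρ g m) from rfl]
          exact Submodule.tmul_mem_baseChange_of_mem 1 (hU g m hm)
        | zero => simpa using (U.baseChange K').zero_mem
        | add x y _ _ ihx ihy =>
          rw [map_add]; exact Submodule.add_mem _ ihx ihy
        | smul c x _ ihx =>
          rw [map_smul]; exact Submodule.smul_mem _ _ ihx
      rcases hirr' (U.baseChange K') hinv' with h | h
      · left
        rw [eq_bot_iff]
        intro x hx
        have : (1 : K') ⊗ₜ[K] x ∈ U.baseChange K' := Submodule.tmul_mem_baseChange_of_mem 1 hx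
        rw [h, Submodule.mem_bot] at this
        simpa using one_tmul_eq_zero_iff.mp this
      · right
        rw [eq_top_iff]
        intro x _
        -- the base change of the quotient map kills U.baseChange = ⊤
        have hq : ∀ y ∈ U.baseChange K', (U.mkQ.baseChange K') y = 0 := by
          intro y hy
          rw [Submodule.baseChange_eq_span] at hy
          induction hy using Submodule.span_induction with
          | mem y hy =>
            obtain ⟨m, hm, rfl⟩ := hy
            show U.mkQ.baseChange K' ((1 : K') ⊗ₜ[K] m) = 0
            rw [LinearMap.baseChange_tmul]
            rw [show U.mkQ m = 0 from (Submodule.Quotient.mk_eq_zero U).mpr hm, tmul_zero]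
          | zero => simp
          | add y z _ _ ihy ihz => rw [map_add, ihy, ihz, add_zero]
          | smul c y _ ihy => rw [map_smul, ihy, smul_zero]
        have h1 : U.mkQ.baseChange K' ((1 : K') ⊗ₜ[K] x) = 0 :=
          hq _ (h ▸ Submodule.mem_top)
        rw [LinearMap.baseChange_tmul] at h1
        have : U.mkQ x = 0 := one_tmul_eq_zero_iff.mp h1
        rwa [← Submodule.Quotient.mk_eq_zero U]
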